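/- Let n ≥ 2 be an integer, t ∈ [0, π/2), s = sin t, and let E₁,…,E_{n+1} ∈ ℝⁿ be unit vectors with ⟨E_i, E_j⟩ = -1/n for i ≠ j. For 0 ≤ k ≤ n-1 let c = (1/(n-k+1))·(E₁ + ⋯ + E_{n-k+1}) and c' = (1/(n-k))·(E₁ + ⋯ + E_{n-k}), where for k = 0 one takes c = (1/(n+1))·(E₁ + ⋯ + E_{n+1}) = 0. Then d_K(s·c, s·c') = artanh( s·√(1 - k/(n(n-k+1))) / ((n-k)·√(1 - s²·k/(n(n-k+1)))) ). (This is the edge length d_{n-k} of the fundamental orthoscheme of the regular simplex τ[n,t].) -/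

import Mathlib

open scoped RealInnerProductSpace
open Real

noncomputable def arcosh (x : ℝ) : ℝ := Real.log (x + Real.sqrt (x ^ 2 - 1))

noncomputable def artanh (x : ℝ) : ℝ := (1 / 2) * Real.log ((1 + x) / (1 - x))

/-- Hyperbolic distance in the Cayley–Klein projective model. -/
noncomputable def dK {n : ℕ} (u w : EuclideanSpace ℝ (Fin n)) : ℝ :=
  _root_.arcosh ((1 - ⟪u, w⟫) / Real.sqrt ((1 - ‖u‖ ^ 2) * (1 - ‖w‖ ^ 2)))

lemma inner_sum_sum {n : ℕ} (hn : 0 < n) (E : Fin (n+1) → EuclideanSpace ℝ (Fin n))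
    (hnorm : ∀ i, ‖E i‖ = 1) (hinner : ∀ i j, i ≠ j → ⟪E i, E j⟫ = -1/(n:ℝ))
    (p q : ℕ) (hpq : p ≤ q) (hq : q ≤ n+1) (hp : p ≤ n+1) :
    ⟪∑ i : Fin p, E (Fin.castLE hp i), ∑ j : Fin q, E (Fin.castLE hq j)⟫
      = p * ((n:ℝ) - q + 1) / n := by
  have hn' : (n:ℝ) ≠ 0 := Nat.cast_ne_zero.2 hn.ne'
  rw [sum_inner]
  simp_rw [inner_sum]
  have key : ∀ (i : Fin p) (j : Fin q),
      ⟪E (Fin.castLE hp i), E (Fin.castLE hq j)⟫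
        = -1/(n:ℝ) + if j = Fin.castLE hpq i then (1:ℝ) + 1/(n:ℝ) else 0 := by
    intro i j
    by_cases h : j = Fin.castLE hpq i
    · have heq : Fin.castLE hp i = Fin.castLE hq j := by
        subst h; ext; simp
      rw [← heq, real_inner_self_eq_norm_sq, hnorm, if_pos h]
      field_simp
      ring
    · rw [hinner _ _ (by
        intro hc
        apply h
        ext
        exact (congrArg Fin.val hc).symm), if_neg h]
      ring
  simp_rw [key, Finset.sum_add_distrib, Finset.sum_const, Finset.sum_ite_eq']
  simp only [Finset.mem_univ, if_true, Finset.card_univ, Fintype.card_fin, nsmul_eq_mul, Finset.sum_const, smul_eq_mul]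
  field_simp
  ring

lemma core_arcosh_artanh (P Q : ℝ) (hQ : 0 < Q) (hPQ : Q ≤ P) :
    _root_.arcosh (P / Real.sqrt (P * Q)) = _root_.artanh (Real.sqrt (P - Q) / Real.sqrt P) := by
  have hP : 0 < P := lt_of_lt_of_le hQ hPQ
  set p := Real.sqrt P with hpd
  set q := Real.sqrt Q with hqd
  set r := Real.sqrt (P - Q) with hrd
  have hp : 0 < p := Real.sqrt_pos.2 hP
  have hq : 0 < q := Real.sqrt_pos.2 hQ
  have hr0 : 0 ≤ r := Real.sqrt_nonneg _
  have hpP : p^2 = P := Real.sq_sqrt hP.le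
  have hqQ : q^2 = Q := Real.sq_sqrt hQ.le
  have hrr : r^2 = P - Q := Real.sq_sqrt (by linarith)
  have hrp : r < p := by nlinarith
  have h1 : P / Real.sqrt (P * Q) = p / q := by
    rw [Real.sqrt_mul hP.le, ← hpd, ← hqd, ← hpP]
    field_simp
  have h2 : (p/q)^2 - 1 = (r/q)^2 := by
    field_simp; nlinarith
  rw [h1, _root_.arcosh, h2, Real.sqrt_sq (by positivity), _root_.artanh]
  have h3 : p/q + r/q = (p + r)/q := by ring
  have hne : (0:ℝ) < 1 - r/p := by
    have : r/p < 1 := (div_lt_one hp).2 hrp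
    linarith
  have h4 : (1 + r/p) / (1 - r/p) = ((p+r)/q)^2 := by
    rw [div_eq_iff hne.ne', div_pow, div_mul_eq_mul_div, eq_div_iff (by positivity)]
    have hq2 : q^2 = p^2 - r^2 := by rw [hpP, hqQ, hrr]; ring
    field_simp
    nlinarith [hq2]
  rw [h3, h4, Real.log_pow]
  push_cast
  ring

theorem orthoscheme_edge_length (n : ℕ) (hn : 2 ≤ n) (t : ℝ) (ht : t ∈ Set.Ico 0 (π / 2))
    (s : ℝ) (hs : s = Real.sin t)
    (E : Fin (n + 1) → EuclideanSpace ℝ (Fin n))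
    (hnorm : ∀ i, ‖E i‖ = 1)
    (hinner : ∀ i j, i ≠ j → ⟪E i, E j⟫ = -1 / (n : ℝ))
    (k : ℕ) (hk : k ≤ n - 1)
    (c c' : EuclideanSpace ℝ (Fin n))
    (hc : c = ((n : ℝ) - k + 1)⁻¹ • ∑ i : Fin (n - k + 1), E (Fin.castLE (by omega) i))
    (hc' : c' = ((n : ℝ) - k)⁻¹ • ∑ i : Fin (n - k), E (Fin.castLE (by omega) i)) :
    dK (s • c) (s • c') =
      _root_.artanh (s * Real.sqrt (1 - (k : ℝ) / (n * ((n : ℝ) - k + 1))) /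
        (((n : ℝ) - k) * Real.sqrt (1 - s ^ 2 * ((k : ℝ) / (n * ((n : ℝ) - k + 1)))))) := by
  have hn0 : 0 < n := by omega
  have hkn : k + 1 ≤ n := by omega
  have hN : (0:ℝ) < (n:ℝ) := by positivity
  have hK1 : (k:ℝ) + 1 ≤ (n:ℝ) := by exact_mod_cast hkn
  have hK0 : (0:ℝ) ≤ (k:ℝ) := Nat.cast_nonneg k
  have hM : (0:ℝ) < (n:ℝ) - k := by linarith
  have hM1 : (0:ℝ) < (n:ℝ) - k + 1 := by linarith
  -- cast facts
  have hcast : ((n - k : ℕ) : ℝ) = (n:ℝ) - k := by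
    rw [Nat.cast_sub (by omega)]
  have hcast1 : ((n - k + 1 : ℕ) : ℝ) = (n:ℝ) - k + 1 := by
    push_cast [hcast]; ring
  -- s facts
  have hs0 : 0 ≤ s := by
    rw [hs]
    exact Real.sin_nonneg_of_nonneg_of_le_pi ht.1 (le_trans ht.2.le (by linarith [Real.pi_pos]))
  have hs2 : s^2 < 1 := by
    have hcos : 0 < Real.cos t := Real.cos_pos_of_mem_Ioo
      ⟨by linarith [ht.1, Real.pi_pos], ht.2⟩
    nlinarith [Real.sin_sq_add_cos_sq t, hs]
  -- abbreviations
  set a : ℝ := (k : ℝ) / (n * ((n : ℝ) - k + 1)) with had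
  set b : ℝ := ((k : ℝ) + 1) / (n * ((n : ℝ) - k)) with hbd
  -- inner products
  have hip_cc : ⟪c, c⟫ = a := by
    rw [hc, real_inner_smul_left, real_inner_smul_right,
      inner_sum_sum hn0 E hnorm hinner (n-k+1) (n-k+1) le_rfl (by omega) (by omega),
      hcast1, had]
    field_simp
    ring
  have hip_cc' : ⟪c, c'⟫ = a := by
    rw [hc, hc', real_inner_smul_left, real_inner_smul_right, real_inner_comm,
      inner_sum_sum hn0 E hnorm hinner (n-k) (n-k+1) (by omega) (by omega) (by omega),
      hcast, hcast1, had]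
    field_simp
    ring
  have hip_c'c' : ⟪c', c'⟫ = b := by
    rw [hc', real_inner_smul_left, real_inner_smul_right,
      inner_sum_sum hn0 E hnorm hinner (n-k) (n-k) le_rfl (by omega) (by omega),
      hcast, hbd]
    field_simp
    ring
  -- bounds on a, b
  have ha0 : 0 ≤ a := by rw [had]; positivity
  have hba : b - a = ((n:ℝ)+1)/(n*((n:ℝ)-k)*((n:ℝ)-k+1)) := by
    rw [had, hbd]; field_simp; ring
  have hab : a ≤ b := by
    have h : (0:ℝ) < ((n:ℝ)+1)/(n*((n:ℝ)-k)*((n:ℝ)-k+1)) := by positivity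
    linarith [hba]
  have hb1 : b ≤ 1 := by
    rw [hbd, div_le_one (by positivity)]
    nlinarith
  -- P, Q
  have hQpos : 0 < 1 - s^2 * b := by
    have h := mul_le_mul_of_nonneg_left hb1 (sq_nonneg s)
    rw [mul_one] at h
    linarith
  have hPQ : 1 - s^2 * b ≤ 1 - s^2 * a := by
    have h := mul_le_mul_of_nonneg_left hab (sq_nonneg s)
    linarith
  -- rewrite dK
  have e1 : ‖s • c‖^2 = s^2 * a := by
    rw [norm_smul, Real.norm_eq_abs, mul_pow, sq_abs, ← real_inner_self_eq_norm_sq, hip_cc]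
  have e2 : ‖s • c'‖^2 = s^2 * b := by
    rw [norm_smul, Real.norm_eq_abs, mul_pow, sq_abs, ← real_inner_self_eq_norm_sq, hip_c'c']
  have e3 : ⟪s • c, s • c'⟫ = s^2 * a := by
    rw [real_inner_smul_left, real_inner_smul_right, hip_cc']
    ring
  rw [dK, e1, e2, e3]
  rw [core_arcosh_artanh (1 - s^2 * a) (1 - s^2 * b) hQpos hPQ]
  congr 1
  -- the argument equality
  have h1a : 1 - a = ((n:ℝ)-k)*((n:ℝ)+1)/(n*((n:ℝ)-k+1)) := by
    rw [had]; field_simp; ring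
  have h1a0 : 0 ≤ 1 - a := by rw [h1a]; positivity
  have h5 : Real.sqrt ((1 - s^2 * a) - (1 - s^2 * b)) = s * Real.sqrt (1 - a) / ((n:ℝ) - k) := by
    rw [show (1 - s^2 * a) - (1 - s^2 * b) = (s * Real.sqrt (1 - a) / ((n:ℝ) - k))^2 by
      rw [div_pow, mul_pow, Real.sq_sqrt h1a0]
      rw [show s^2 * (1-a) / ((n:ℝ)-k)^2 = s^2 * ((1-a)/((n:ℝ)-k)^2) by ring]
      rw [show (1-a)/((n:ℝ)-k)^2 = b - a by rw [h1a, hba]; field_simp]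
      ring]
    exact Real.sqrt_sq (by positivity)
  rw [h5, div_div]
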